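/- Let v : [0,T] → ℝ be C¹ with v(t) ≥ θ₀ > 0 for all t, and Φ₀, Φ₁ : [0,T] → ℝ be C¹. Define Π₁(η₁,t) = (Φ₁(t) + (Φ₀(t) v'(t)/v(t)² − Φ₀'(t)/v(t)) η₁ + (Φ₀(t) v'(t)/(2 v(t))) η₁²) e^{−v(t) η₁}. Then for each t ∈ [0,T], Π₁ satisfies ∂²_{η₁η₁} Π₁ + v(t) ∂_{η₁} Π₁ = ∂_t Π₀ on (0,∞), where Π₀(η₁,t) = Φ₀(t) e^{−v(t) η₁}, with Π₁(0,t) = Φ₁(t). -/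

import Mathlib

lemma poly_exp_deriv (a b c k : ℝ) (s : ℝ) :
    HasDerivAt (fun s => (a + b * s + c * s ^ 2) * Real.exp (-k * s))
      (((b - k * a) + (2 * c - k * b) * s + (-k * c) * s ^ 2) * Real.exp (-k * s)) s := by
  have h1 : HasDerivAt (fun s : ℝ => a + b * s + c * s ^ 2) (b + 2 * c * s) s := by
    have hb : HasDerivAt (fun s : ℝ => b * s) b s := by
      simpa using (hasDerivAt_id s).const_mul b
    have hc : HasDerivAt (fun s : ℝ => c * s ^ 2) (c * (2 * s)) s := by
      simpa using (hasDerivAt_pow 2 s).const_mul c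
    have : HasDerivAt (fun s : ℝ => a + b * s + c * s ^ 2) (0 + b + c * (2 * s)) s :=
      ((hasDerivAt_const s a).add hb).add hc
    convert this using 1
    ring
  have h2 : HasDerivAt (fun s : ℝ => Real.exp (-k * s)) (Real.exp (-k * s) * (-k)) s := by
    have : HasDerivAt (fun s : ℝ => -k * s) (-k) s := by
      simpa using (hasDerivAt_id s).const_mul (-k)
    exact this.exp
  have : HasDerivAt (fun s : ℝ => (a + b * s + c * s ^ 2) * Real.exp (-k * s))
      ((b + 2 * c * s) * Real.exp (-k * s) + (a + b * s + c * s ^ 2) * (Real.exp (-k * s) * (-k))) s :=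
    h1.mul h2
  convert this using 1
  ring

/-- The first-order boundary-layer corrector
`Pi1(η₁,t) = (Φ₁ + (Φ₀ v'/v² − Φ₀'/v) η₁ + (Φ₀ v'/(2v)) η₁²) e^{−v η₁}` satisfies, for each
`t ∈ [0,T]`, the ODE `∂²_{η₁η₁} Pi1 + v(t) ∂_{η₁} Pi1 = ∂_t Pi0` on `(0,∞)`, where
`Pi0(η₁,t) = Φ₀(t) e^{−v(t) η₁}`, together with `Pi1(0,t) = Φ₁(t)`. -/
theorem boundary_layer_first_order
    (T θ₀ : ℝ) (hT : 0 < T) (hθ₀ : 0 < θ₀)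
    (v Φ₀ Φ₁ : ℝ → ℝ)
    (hv : ContDiff ℝ 1 v) (hvθ : ∀ t ∈ Set.Icc (0 : ℝ) T, θ₀ ≤ v t)
    (hΦ₀ : ContDiff ℝ 1 Φ₀) (hΦ₁ : ContDiff ℝ 1 Φ₁)
    (Pi0 Pi1 : ℝ → ℝ → ℝ)
    (hPi0 : ∀ η₁ t, Pi0 η₁ t = Φ₀ t * Real.exp (-(v t) * η₁))
    (hPi1 : ∀ η₁ t, Pi1 η₁ t =
      (Φ₁ t + (Φ₀ t * deriv v t / (v t) ^ 2 - deriv Φ₀ t / v t) * η₁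
        + (Φ₀ t * deriv v t / (2 * v t)) * η₁ ^ 2) * Real.exp (-(v t) * η₁)) :
    ∀ t ∈ Set.Icc (0 : ℝ) T,
      (∀ η₁ ∈ Set.Ioi (0 : ℝ),
        deriv (deriv (fun s => Pi1 s t)) η₁ + v t * deriv (fun s => Pi1 s t) η₁
          = deriv (fun τ => Pi0 η₁ τ) t) ∧
      Pi1 0 t = Φ₁ t := by
  intro t ht
  have hk : 0 < v t := lt_of_lt_of_le hθ₀ (hvθ t ht)
  have hkne : v t ≠ 0 := ne_of_gt hk
  set k := v t with hkdef
  set a := Φ₁ t with hadef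
  set b := Φ₀ t * deriv v t / (v t) ^ 2 - deriv Φ₀ t / v t with hbdef
  set c := Φ₀ t * deriv v t / (2 * v t) with hcdef
  have hfun : (fun s => Pi1 s t) = fun s => (a + b * s + c * s ^ 2) * Real.exp (-k * s) := by
    funext s; rw [hPi1]
  -- first derivative
  have hd1 : deriv (fun s => Pi1 s t)
      = fun s => ((b - k * a) + (2 * c - k * b) * s + (-k * c) * s ^ 2) * Real.exp (-k * s) := by
    funext s
    rw [hfun]
    exact (poly_exp_deriv a b c k s).deriv
  -- second derivative
  have hd2 : ∀ s, deriv (deriv (fun s => Pi1 s t)) s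
      = (((2 * c - k * b) - k * (b - k * a))
        + (2 * (-k * c) - k * (2 * c - k * b)) * s
        + (-k * (-k * c)) * s ^ 2) * Real.exp (-k * s) := by
    intro s
    rw [hd1]
    exact (poly_exp_deriv (b - k * a) (2 * c - k * b) (-k * c) k s).deriv
  refine ⟨?_, ?_⟩
  · intro η hη
    -- time derivative of Pi0
    have hv' : HasDerivAt v (deriv v t) t :=
      ((hv.differentiable one_ne_zero) t).hasDerivAt
    have hΦ₀' : HasDerivAt Φ₀ (deriv Φ₀ t) t :=
      ((hΦ₀.differentiable one_ne_zero) t).hasDerivAt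
    have hexp : HasDerivAt (fun τ => Real.exp (-(v τ) * η))
        (Real.exp (-(v t) * η) * (-(deriv v t) * η)) t := by
      have : HasDerivAt (fun τ => -(v τ) * η) (-(deriv v t) * η) t :=
        (hv'.neg).mul_const η
      exact this.exp
    have hrhs : deriv (fun τ => Pi0 η τ) t
        = deriv Φ₀ t * Real.exp (-(v t) * η)
          + Φ₀ t * (Real.exp (-(v t) * η) * (-(deriv v t) * η)) := by
      have : (fun τ => Pi0 η τ) = fun τ => Φ₀ τ * Real.exp (-(v τ) * η) := by
        funext τ; rw [hPi0]
      rw [this]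
      exact (hΦ₀'.mul hexp).deriv
    rw [hrhs, hd2, hd1]
    have hexpeq : Real.exp (-(v t) * η) = Real.exp (-k * η) := by rw [hkdef]
    rw [hexpeq]
    have hb' : b = Φ₀ t * deriv v t / k ^ 2 - deriv Φ₀ t / k := hbdef
    have hc' : c = Φ₀ t * deriv v t / (2 * k) := hcdef
    rw [hb', hc']
    field_simp
    ring
  · rw [hPi1]; simp [hadef]
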